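/- Let I be a monomial ideal of S of Borel type. Then the integral closure Ī of I is again a monomial ideal of Borel type. -/

import Mathlib

open MvPolynomial Pointwise

set_option maxHeartbeats 1000000

section Aux

variable {K : Type*} [Field K] {n : ℕ}

lemma aux_mono_mem_span_iff {G : Set (Fin n →₀ ℕ)} {a : Fin n →₀ ℕ} :
    (monomial a (1 : K) : MvPolynomial (Fin n) K) ∈
      Ideal.span ((fun b => (monomial b (1 : K) : MvPolynomial (Fin n) K)) '' G) ↔
    ∃ b ∈ G, b ≤ a := by
  rw [mem_ideal_span_monomial_image]
  simp [support_monomial]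

lemma aux_image_mul_image (A B : Set (Fin n →₀ ℕ)) :
    ((fun b => (monomial b (1 : K) : MvPolynomial (Fin n) K)) '' A) *
      ((fun b => (monomial b (1 : K) : MvPolynomial (Fin n) K)) '' B) =
    (fun b => (monomial b (1 : K) : MvPolynomial (Fin n) K)) '' (A + B) := by
  ext p
  constructor
  · rintro ⟨_, ⟨a, ha, rfl⟩, _, ⟨b, hb, rfl⟩, rfl⟩
    exact ⟨a + b, Set.add_mem_add ha hb, by simp [monomial_mul]⟩
  · rintro ⟨_, ⟨a, ha, b, hb, rfl⟩, rfl⟩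
    exact ⟨_, ⟨a, ha, rfl⟩, _, ⟨b, hb, rfl⟩, by simp [monomial_mul]⟩

/-- Exponents that are sums of `k` exponents from `G`. -/
def GsumSet {n : ℕ} (G : Set (Fin n →₀ ℕ)) (k : ℕ) : Set (Fin n →₀ ℕ) :=
  {d | ∃ f : Fin k → (Fin n →₀ ℕ), (∀ l, f l ∈ G) ∧ ∑ l, f l = d}

lemma aux_span_pow (G : Set (Fin n →₀ ℕ)) (k : ℕ) :
    (Ideal.span ((fun b => (monomial b (1 : K) : MvPolynomial (Fin n) K)) '' G)) ^ k =
    Ideal.span ((fun b => (monomial b (1 : K) : MvPolynomial (Fin n) K)) '' GsumSet G k) := by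
  induction k with
  | zero =>
    have h0 : GsumSet G 0 = {(0 : Fin n →₀ ℕ)} := by
      ext d
      simp [GsumSet, eq_comm]
    rw [pow_zero, h0]
    simp only [Set.image_singleton, monomial_zero', C_1, Ideal.span_singleton_one,
      Ideal.one_eq_top]
  | succ k ih =>
    have hset : G + GsumSet G k = GsumSet G (k + 1) := by
      ext d
      rw [Set.mem_add]
      simp only [GsumSet, Set.mem_setOf_eq]
      constructor
      · rintro ⟨g, hg, e, ⟨f, hf, rfl⟩, rfl⟩
        refine ⟨Fin.cons g f, fun l => ?_, by rw [Fin.sum_cons]⟩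
        refine Fin.cases ?_ ?_ l
        · simpa using hg
        · intro m; simpa using hf m
      · rintro ⟨f, hf, rfl⟩
        exact ⟨f 0, hf 0, ∑ l : Fin k, f l.succ, ⟨fun l => f l.succ, fun l => hf _, rfl⟩,
          (Fin.sum_univ_succ f).symm⟩
    rw [pow_succ', ih, Ideal.span_mul_span', aux_image_mul_image, hset]

lemma aux_mono_mem_pow_iff {G : Set (Fin n →₀ ℕ)} {c : Fin n →₀ ℕ} {k : ℕ} :
    (monomial c (1 : K) : MvPolynomial (Fin n) K) ∈
      (Ideal.span ((fun b => (monomial b (1 : K) : MvPolynomial (Fin n) K)) '' G)) ^ k ↔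
    ∃ f : Fin k → (Fin n →₀ ℕ), (∀ l, f l ∈ G) ∧ ∑ l, f l ≤ c := by
  rw [aux_span_pow, aux_mono_mem_span_iff]
  constructor
  · rintro ⟨d, ⟨f, hf, rfl⟩, hle⟩
    exact ⟨f, hf, hle⟩
  · rintro ⟨f, hf, hle⟩
    exact ⟨∑ l, f l, ⟨f, hf, rfl⟩, hle⟩

lemma aux_mem_pow_of {I : Ideal (MvPolynomial (Fin n) K)} {G : Set (Fin n →₀ ℕ)}
    (hG : I = Ideal.span ((fun b => (monomial b (1 : K) : MvPolynomial (Fin n) K)) '' G))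
    {k : ℕ} {c : Fin n →₀ ℕ} (e : Fin k → (Fin n →₀ ℕ))
    (he : ∀ l, (monomial (e l) (1 : K) : MvPolynomial (Fin n) K) ∈ I)
    (hle : ∑ l, e l ≤ c) :
    (monomial c (1 : K) : MvPolynomial (Fin n) K) ∈ I ^ k := by
  have hg : ∀ l, ∃ g ∈ G, g ≤ e l := by
    intro l
    have := he l
    rw [hG, aux_mono_mem_span_iff] at this
    exact this
  choose g hgG hgle using hg
  rw [hG, aux_mono_mem_pow_iff]
  exact ⟨g, hgG, le_trans (Finset.sum_le_sum fun l _ => hgle l) hle⟩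

end Aux

/-- An ideal of `K[x_1, …, x_n]` is a monomial ideal if it is generated by monomials. -/
def IsMonomialIdeal {K : Type*} [Field K] {n : ℕ} (I : Ideal (MvPolynomial (Fin n) K)) : Prop :=
  ∃ G : Set (Fin n →₀ ℕ),
    I = Ideal.span ((fun a => (monomial a (1 : K) : MvPolynomial (Fin n) K)) '' G)

/-- A monomial ideal `I` is of Borel type if for every monomial `u ∈ I` and all
`i < j`, `s ≥ 1` with `x_j ^ s ∣ u`, there is `t ≥ 0` with `x_i ^ t * (u / x_j ^ s) ∈ I`. -/
def IsBorelType {K : Type*} [Field K] {n : ℕ} (I : Ideal (MvPolynomial (Fin n) K)) : Prop :=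
  ∀ a : Fin n →₀ ℕ, (monomial a (1 : K) : MvPolynomial (Fin n) K) ∈ I →
    ∀ i j : Fin n, i < j → ∀ s : ℕ, 1 ≤ s → s ≤ a j →
      ∃ t : ℕ,
        (monomial (a - Finsupp.single j s + Finsupp.single i t) (1 : K) :
          MvPolynomial (Fin n) K) ∈ I

/-- The integral closure of a monomial ideal `I`: the ideal generated by all
monomials `u` such that `u ^ k ∈ I ^ k` for some integer `k ≥ 1`. -/
noncomputable def monomialIntegralClosure {K : Type*} [Field K] {n : ℕ}
    (I : Ideal (MvPolynomial (Fin n) K)) : Ideal (MvPolynomial (Fin n) K) :=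
  Ideal.span {m | ∃ a : Fin n →₀ ℕ, m = (monomial a (1 : K) : MvPolynomial (Fin n) K) ∧
    ∃ k : ℕ, 1 ≤ k ∧ m ^ k ∈ I ^ k}

/-- If `I` is a monomial ideal of Borel type, then its integral closure is again a
monomial ideal of Borel type. -/
theorem integralClosure_borelType {K : Type*} [Field K] {n : ℕ}
    (I : Ideal (MvPolynomial (Fin n) K)) (hmon : IsMonomialIdeal I) (hBT : IsBorelType I) :
    IsMonomialIdeal (monomialIntegralClosure I) ∧ IsBorelType (monomialIntegralClosure I) := by
  obtain ⟨G, hG⟩ := hmon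
  set G' : Set (Fin n →₀ ℕ) :=
    {a | ∃ k : ℕ, 1 ≤ k ∧
      ((monomial a (1 : K) : MvPolynomial (Fin n) K)) ^ k ∈ I ^ k} with hG'def
  have hclo : monomialIntegralClosure I =
      Ideal.span ((fun a => (monomial a (1 : K) : MvPolynomial (Fin n) K)) '' G') := by
    rw [monomialIntegralClosure]
    congr 1
    ext m
    constructor
    · rintro ⟨a, rfl, hk⟩; exact ⟨a, hk, rfl⟩
    · rintro ⟨a, hk, rfl⟩; exact ⟨a, rfl, hk⟩
  refine ⟨⟨G', hclo⟩, ?_⟩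
  intro a ha i j hij s hs1 hsa
  have hne : i ≠ j := ne_of_lt hij
  rw [hclo, aux_mono_mem_span_iff] at ha
  obtain ⟨b, ⟨k, hk1, hbk⟩, hba⟩ := ha
  rw [monomial_pow, one_pow, hG, aux_mono_mem_pow_iff] at hbk
  obtain ⟨f, hfG, hfb⟩ := hbk
  have hfI : ∀ l, (monomial (f l) (1 : K) : MvPolynomial (Fin n) K) ∈ I := fun l => by
    rw [hG]; exact Ideal.subset_span ⟨f l, hfG l, rfl⟩
  have key : ∀ l, ∃ t, (monomial (f l - Finsupp.single j ((f l) j) + Finsupp.single i t)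
      (1 : K) : MvPolynomial (Fin n) K) ∈ I := by
    intro l
    by_cases h0 : (f l) j = 0
    · refine ⟨0, ?_⟩
      simpa [h0, Finsupp.single_zero] using hfI l
    · exact hBT (f l) (hfI l) i j hij ((f l) j) (Nat.one_le_iff_ne_zero.mpr h0) le_rfl
  choose t ht using key
  set T := ∑ l, t l with hT
  refine ⟨T, ?_⟩
  rw [hclo]
  apply Ideal.subset_span
  refine ⟨a - Finsupp.single j s + Finsupp.single i T, ⟨k, hk1, ?_⟩, rfl⟩
  rw [monomial_pow, one_pow]
  -- pointwise inequalities from hfb and hba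
  have hfb' : ∀ x, ∑ l, (f l) x ≤ k * b x := by
    intro x
    have h := Finsupp.le_def.mp hfb x
    rw [Finsupp.finset_sum_apply] at h
    simpa using h
  have hba' : ∀ x, b x ≤ a x := Finsupp.le_def.mp hba
  refine aux_mem_pow_of hG
    (fun l => f l - Finsupp.single j ((f l) j) + Finsupp.single i (t l)) ht ?_
  rw [Finsupp.le_def]
  intro x
  rw [Finsupp.finset_sum_apply]
  simp only [Finsupp.add_apply, Finsupp.tsub_apply, Finsupp.smul_apply, smul_eq_mul]
  rcases eq_or_ne x j with rfl | hxj
  · have hz : ∀ l : Fin k,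
        (f l) x - (Finsupp.single x ((f l) x)) x + (Finsupp.single i (t l)) x = 0 := by
      intro l
      rw [Finsupp.single_eq_same, Finsupp.single_eq_of_ne' hne]
      omega
    rw [Finset.sum_congr rfl fun l _ => hz l]
    simp
  · rcases eq_or_ne x i with rfl | hxi
    · have hz : ∀ l : Fin k,
          (f l) x - (Finsupp.single j ((f l) j)) x + (Finsupp.single x (t l)) x
            = (f l) x + t l := by
        intro l
        rw [Finsupp.single_eq_of_ne' (Ne.symm hxj), Finsupp.single_eq_same]
        omega
      have hrhs : a x - (Finsupp.single j s) x + (Finsupp.single x T) x = a x + T := by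
        rw [Finsupp.single_eq_of_ne' (Ne.symm hxj), Finsupp.single_eq_same]
        omega
      rw [Finset.sum_congr rfl fun l _ => hz l, Finset.sum_add_distrib, ← hT, hrhs,
        Nat.mul_add]
      have h1 : (∑ l, (f l) x) ≤ k * a x :=
        le_trans (hfb' x) (Nat.mul_le_mul_left k (hba' x))
      have h2 : T ≤ k * T := Nat.le_mul_of_pos_left T hk1
      omega
    · have hz : ∀ l : Fin k,
          (f l) x - (Finsupp.single j ((f l) j)) x + (Finsupp.single i (t l)) x
            = (f l) x := by
        intro l
        rw [Finsupp.single_eq_of_ne' (Ne.symm hxj), Finsupp.single_eq_of_ne' (Ne.symm hxi)]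
        omega
      have hrhs : a x - (Finsupp.single j s) x + (Finsupp.single i T) x = a x := by
        rw [Finsupp.single_eq_of_ne' (Ne.symm hxj), Finsupp.single_eq_of_ne' (Ne.symm hxi)]
        omega
      rw [Finset.sum_congr rfl fun l _ => hz l, hrhs]
      exact le_trans (hfb' x) (Nat.mul_le_mul_left k (hba' x))
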